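/- Let F be a finite field with |F| = q, let k ≥ 2 be an integer, and let A ∈ M_k(F) have rank r. Then the set V = {(x, y) ∈ F^k × F^k : xᵀ A y = 0} has cardinality |V| = q^{2(k−r)} ((q^r − 1) q^{r−1} + q^r). -/

import Mathlib

/-- Let `F` be a finite field with `|F| = q`, `k ≥ 2`, and let `A ∈ M_k(F)` have
rank `r`. Then `|{(x,y) ∈ Fᵏ × Fᵏ : xᵀ A y = 0}| = q^{2(k−r)}((qʳ − 1) q^{r−1} + qʳ)`. -/
theorem card_bilinear_zero_pairs (F : Type) [Field F] [Fintype F]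
    (k : ℕ) (hk : 2 ≤ k) (A : Matrix (Fin k) (Fin k) F) (r : ℕ) (hr : A.rank = r) :
    Nat.card {p : (Fin k → F) × (Fin k → F) // dotProduct p.1 (A.mulVec p.2) = 0} =
      Fintype.card F ^ (2 * (k - r)) *
        ((Fintype.card F ^ r - 1) * Fintype.card F ^ (r - 1) + Fintype.card F ^ r) := by
  classical
  set q := Fintype.card F with hq
  have hq2 : 2 ≤ q := Fintype.one_lt_card
  have hrk : r ≤ k := by
    have := A.rank_le_card_width
    simp only [Fintype.card_fin] at this
    omega
  have hfin : Module.finrank F (Fin k → F) = k := by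
    rw [Module.finrank_pi]; simp
  have hcard_fun : Fintype.card (Fin k → F) = q ^ k := by
    rw [Module.card_eq_pow_finrank (K := F), hfin]
  -- card of y-solution sets for a fixed vector v
  have key : ∀ v : Fin k → F, Fintype.card {y : Fin k → F // dotProduct v y = 0}
      = if v = 0 then q ^ k else q ^ (k - 1) := by
    intro v
    by_cases hv : v = 0
    · rw [if_pos hv]
      rw [Fintype.card_congr (Equiv.subtypeUnivEquiv (fun y => by simp [hv]))]
      exact hcard_fun
    · rw [if_neg hv]
      let φ : (Fin k → F) →ₗ[F] F :=
        { toFun := fun y => dotProduct v y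
          map_add' := fun a b => dotProduct_add v a b
          map_smul' := fun c a => by simp [dotProduct_smul] }
      have hc : Fintype.card {y : Fin k → F // dotProduct v y = 0}
          = Fintype.card (LinearMap.ker φ) := by
        apply Fintype.card_congr
        exact Equiv.subtypeEquivRight fun y => by simp [φ, LinearMap.mem_ker]
      rw [hc, Module.card_eq_pow_finrank (K := F)]
      congr 1
      -- finrank ker φ = k - 1
      obtain ⟨i, hi⟩ : ∃ i, v i ≠ 0 := by
        by_contra h
        push_neg at h
        exact hv (funext fun i => h i)
      have hsurj : LinearMap.range φ = ⊤ := by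
        rw [LinearMap.range_eq_top]
        intro c
        refine ⟨Pi.single i (c / v i), ?_⟩
        show dotProduct v (Pi.single i (c / v i)) = c
        rw [dotProduct_single]
        field_simp
      have hrn := LinearMap.finrank_range_add_finrank_ker φ
      rw [hsurj, finrank_top, hfin] at hrn
      have : Module.finrank F F = 1 := Module.finrank_self F
      omega
  -- card of x-kernel
  have hx : Fintype.card {x : Fin k → F // Matrix.vecMul x A = 0} = q ^ (k - r) := by
    have hc : Fintype.card {x : Fin k → F // Matrix.vecMul x A = 0}
        = Fintype.card (LinearMap.ker (A.transpose.mulVecLin)) := by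
      apply Fintype.card_congr
      exact Equiv.subtypeEquivRight fun x => by
        simp [LinearMap.mem_ker, Matrix.mulVecLin, Matrix.mulVec_transpose]
    rw [hc, Module.card_eq_pow_finrank (K := F)]
    congr 1
    have hrn := LinearMap.finrank_range_add_finrank_ker (A.transpose.mulVecLin)
    have hrA : Module.finrank F (LinearMap.range A.transpose.mulVecLin) = r := by
      have : A.transpose.rank = r := by rw [Matrix.rank_transpose, hr]
      simpa [Matrix.rank] using this
    rw [hrA, hfin] at hrn
    omega
  -- main count
  rw [Nat.card_eq_fintype_card,
    Fintype.card_congr (Equiv.subtypeProdEquivSigmaSubtype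
      fun x y : Fin k → F => dotProduct x (A.mulVec y) = 0),
    Fintype.card_sigma]
  simp_rw [Matrix.dotProduct_mulVec, key]
  rw [Finset.sum_ite, Finset.sum_const, Finset.sum_const, smul_eq_mul, smul_eq_mul]
  have h1 : (Finset.filter (fun x => Matrix.vecMul x A = 0) Finset.univ).card = q ^ (k - r) := by
    rw [← Fintype.card_subtype]; exact hx
  have h2 : (Finset.filter (fun x => ¬Matrix.vecMul x A = 0) Finset.univ).card
      = q ^ k - q ^ (k - r) := by
    have := Finset.card_filter_add_card_filter_not
      (s := (Finset.univ : Finset (Fin k → F))) (fun x => Matrix.vecMul x A = 0)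
    rw [h1, Finset.card_univ, hcard_fun] at this
    omega
  rw [h1, h2]
  -- arithmetic
  rcases Nat.eq_zero_or_pos r with hr0 | hr1
  · subst hr0
    simp [two_mul, pow_add]
  · -- r ≥ 1
    have e1 : q ^ k = q ^ (k - r) * q ^ (r - 1) * q := by
      rw [mul_assoc, ← pow_succ, ← pow_add]; congr 1; omega
    have e2 : q ^ (k - 1) = q ^ (k - r) * q ^ (r - 1) := by
      rw [← pow_add]; congr 1; omega
    have e3 : q ^ r = q ^ (r - 1) * q := by rw [← pow_succ]; congr 1; omega
    have e4 : q ^ (2 * (k - r)) = q ^ (k - r) * q ^ (k - r) := by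
      rw [← pow_add]; congr 1; omega
    rw [e1, e2, e3, e4]
    set a := q ^ (k - r)
    set b := q ^ (r - 1)
    have ha : 1 ≤ a := Nat.one_le_pow _ _ (by omega)
    have hb : 1 ≤ b := Nat.one_le_pow _ _ (by omega)
    have h5 : a ≤ a * b * q := by
      rw [mul_assoc]
      exact Nat.le_mul_of_pos_right a (Nat.mul_pos hb (by omega))
    have h6 : 1 ≤ b * q := Nat.mul_pos hb (by omega)
    zify [h5, h6]
    ring
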